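/- arXiv:1803.10209 — 2 statements merged into one kernel-verified Lean document; each statement's English description precedes it below -/
import Mathlib

section
/- Let Q be a graph, k a field, and v ∈ Q0 a vertex that is either a sink or the base of a loop, with {v} a hereditary subset of Q0. Then the two-sided ideal I(v) of L_k(Q) generated by v equals the k-linear span of elements of the form x y*, where x, y are finite paths in Q both ending at v. -/
open scoped TensorProduct

noncomputable section

structure LGraph where
  V : Type
  E : Type
  s : E → V
  t : E → V

namespace Graph

/-- Generators of the Leavitt path algebra: vertices, edges, and ghost edges. -/
inductive LGen (Q : LGraph) : Type
  | vert : Q.V → LGen Q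
  | edge : Q.E → LGen Q
  | ghost : Q.E → LGen Q

/-- The degree of a generator: vertices have degree 0, edges degree 1,
ghost edges degree -1. -/
def gdeg {Q : LGraph} : LGen Q → ℤ
  | .vert _ => 0
  | .edge _ => 1
  | .ghost _ => -1

open LGen in
/-- The Leavitt path algebra relations (L1)-(L5). -/
inductive LeavittRel (k : Type) [CommRing k] (Q : LGraph) [DecidableEq Q.V] [DecidableEq Q.E] :
    FreeAlgebra k (LGen Q) → FreeAlgebra k (LGen Q) → Prop
  | vv (v w : Q.V) : LeavittRel k Q
      (FreeAlgebra.ι k (vert v) * FreeAlgebra.ι k (vert w))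
      (if v = w then FreeAlgebra.ι k (vert v) else 0)
  | se (e : Q.E) : LeavittRel k Q
      (FreeAlgebra.ι k (vert (Q.s e)) * FreeAlgebra.ι k (edge e)) (FreeAlgebra.ι k (edge e))
  | et (e : Q.E) : LeavittRel k Q
      (FreeAlgebra.ι k (edge e) * FreeAlgebra.ι k (vert (Q.t e))) (FreeAlgebra.ι k (edge e))
  | tg (e : Q.E) : LeavittRel k Q
      (FreeAlgebra.ι k (vert (Q.t e)) * FreeAlgebra.ι k (ghost e)) (FreeAlgebra.ι k (ghost e))
  | gs (e : Q.E) : LeavittRel k Q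
      (FreeAlgebra.ι k (ghost e) * FreeAlgebra.ι k (vert (Q.s e))) (FreeAlgebra.ι k (ghost e))
  | gf (e f : Q.E) : LeavittRel k Q
      (FreeAlgebra.ι k (ghost e) * FreeAlgebra.ι k (edge f))
      (if e = f then FreeAlgebra.ι k (vert (Q.t e)) else 0)
  | ck (v : Q.V) (h : {e : Q.E | Q.s e = v}.Finite) (hne : {e : Q.E | Q.s e = v}.Nonempty) :
      LeavittRel k Q
        (∑ e ∈ h.toFinset, FreeAlgebra.ι k (edge e) * FreeAlgebra.ι k (ghost e))
        (FreeAlgebra.ι k (vert v))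

/-- The Leavitt path algebra of a graph `Q` over `k`. -/
abbrev LPA (k : Type) [CommRing k] (Q : LGraph) [DecidableEq Q.V] [DecidableEq Q.E] : Type :=
  RingQuot (LeavittRel k Q)

variable (k : Type) [CommRing k] (Q : LGraph) [DecidableEq Q.V] [DecidableEq Q.E]

/-- The vertex generators of the Leavitt path algebra. -/
def Lvert (v : Q.V) : LPA k Q :=
  RingQuot.mkAlgHom k (LeavittRel k Q) (FreeAlgebra.ι k (.vert v))

/-- The edge generators of the Leavitt path algebra. -/
def Ledge (e : Q.E) : LPA k Q :=
  RingQuot.mkAlgHom k (LeavittRel k Q) (FreeAlgebra.ι k (.edge e))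

/-- The ghost-edge generators of the Leavitt path algebra. -/
def Lghost (e : Q.E) : LPA k Q :=
  RingQuot.mkAlgHom k (LeavittRel k Q) (FreeAlgebra.ι k (.ghost e))

/-- The `n`-th homogeneous component of the standard `ℤ`-grading of the Leavitt
path algebra: spanned by monomials in the generators of total degree `n`, where
edges have degree `1`, ghost edges degree `-1` and vertices degree `0`. -/
def homComp (n : ℤ) : Submodule k (LPA k Q) :=
  Submodule.span k { a : LPA k Q | ∃ l : List (LGen Q), (l.map gdeg).sum = n ∧
    a = RingQuot.mkAlgHom k (LeavittRel k Q) ((l.map (FreeAlgebra.ι k)).prod) }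

/-- Paths in a graph, from a vertex to a vertex. -/
inductive GPath (Q : LGraph) : Q.V → Q.V → Type
  | nil (v : Q.V) : GPath Q v v
  | cons (e : Q.E) {w : Q.V} (p : GPath Q (Q.t e) w) : GPath Q (Q.s e) w

/-- Length of a path. -/
def GPath.length {Q : LGraph} : ∀ {v w : Q.V}, GPath Q v w → ℕ
  | _, _, .nil _ => 0
  | _, _, .cons _ p => p.length + 1

/-- Concatenation of composable paths. -/
def GPath.comp {Q : LGraph} : ∀ {u v w : Q.V}, GPath Q u v → GPath Q v w → GPath Q u w
  | _, _, _, .nil _, q => q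
  | _, _, _, .cons e p, q => .cons e (p.comp q)

/-- The element of the Leavitt path algebra corresponding to a path. -/
def pathElem : ∀ {v w : Q.V}, GPath Q v w → LPA k Q
  | _, _, .nil v => Lvert k Q v
  | _, _, .cons e p => Ledge k Q e * pathElem p

/-- The element of the Leavitt path algebra corresponding to the reversed ghost path `y*`. -/
def ghostElem : ∀ {v w : Q.V}, GPath Q v w → LPA k Q
  | _, _, .nil v => Lvert k Q v
  | _, _, .cons e p => ghostElem p * Lghost k Q e

/-- The graph `Q \ {v₀}`: remove the vertex `v₀` and all edges ending at `v₀`.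
This needs `{v₀}` to be hereditary, i.e. every edge emitted by `v₀` ends at `v₀`. -/
def deleteVertex (Q : LGraph) (v₀ : Q.V) (h : ∀ e, Q.s e = v₀ → Q.t e = v₀) : LGraph where
  V := {v : Q.V // v ≠ v₀}
  E := {e : Q.E // Q.t e ≠ v₀}
  s e := ⟨Q.s e.1, fun hs => e.2 (h e.1 hs)⟩
  t e := ⟨Q.t e.1, e.2⟩

/-- The graph obtained by removing a single edge `x₀`. -/
def deleteEdge (Q : LGraph) (x₀ : Q.E) : LGraph where
  V := Q.V
  E := {e : Q.E // e ≠ x₀}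
  s e := Q.s e.1
  t e := Q.t e.1


instance (Q : LGraph) [DecidableEq Q.V] (v₀ : Q.V) (h : ∀ e, Q.s e = v₀ → Q.t e = v₀) :
    DecidableEq (deleteVertex Q v₀ h).V :=
  inferInstanceAs (DecidableEq {v : Q.V // v ≠ v₀})

instance (Q : LGraph) [DecidableEq Q.E] (v₀ : Q.V) (h : ∀ e, Q.s e = v₀ → Q.t e = v₀) :
    DecidableEq (deleteVertex Q v₀ h).E :=
  inferInstanceAs (DecidableEq {e : Q.E // Q.t e ≠ v₀})

instance (Q : LGraph) [DecidableEq Q.V] (x₀ : Q.E) : DecidableEq (deleteEdge Q x₀).V :=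
  inferInstanceAs (DecidableEq Q.V)

instance (Q : LGraph) [DecidableEq Q.E] (x₀ : Q.E) : DecidableEq (deleteEdge Q x₀).E :=
  inferInstanceAs (DecidableEq {e : Q.E // e ≠ x₀})

/-- A graph `Q` is `(Q', v₀)`-trimmable, where `Q'` is the subgraph obtained by removing
`v₀` and all edges ending in `v₀`: the only edge emitted by `v₀` is a loop `x₀` at `v₀`,
at least one other edge ends at `v₀`, and every vertex emitting an edge into `v₀`
also emits an edge ending inside `Q'`. -/
structure IsTrimmable (Q : LGraph) (v₀ : Q.V) (x₀ : Q.E) : Prop where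
  loop_src : Q.s x₀ = v₀
  loop_tgt : Q.t x₀ = v₀
  only_out : ∀ e, Q.s e = v₀ → e = x₀
  exists_into : ∃ e, Q.t e = v₀ ∧ e ≠ x₀
  no_new_sinks : ∀ e, Q.t e = v₀ → e ≠ x₀ → ∃ e', Q.s e' = Q.s e ∧ Q.t e' ≠ v₀

/-- In a trimmable graph, `{v₀}` is hereditary. -/
theorem IsTrimmable.her {Q : LGraph} {v₀ : Q.V} {x₀ : Q.E} (h : IsTrimmable Q v₀ x₀) :
    ∀ e, Q.s e = v₀ → Q.t e = v₀ := fun e hs => by rw [h.only_out e hs]; exact h.loop_tgt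

/-- The `n`-th homogeneous component of `A ⊗ k[u,u⁻¹]` for the grading given by the
degree on the Laurent polynomial tensorand: elements of the form `a ⊗ uⁿ`. -/
def tensorGrade (k A : Type) [CommRing k] [Ring A] [Algebra k A] (n : ℤ) :
    Submodule k (A ⊗[k] LaurentPolynomial k) :=
  LinearMap.range ((TensorProduct.mk k A (LaurentPolynomial k)).flip (LaurentPolynomial.T n))

section AuxLemmas

/-! ### Basic consequences of the Leavitt relations -/

theorem Lvv (a b : Q.V) :
    Lvert k Q a * Lvert k Q b = if a = b then Lvert k Q a else 0 := by
  have h := RingQuot.mkAlgHom_rel k (LeavittRel.vv (k := k) (Q := Q) a b)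
  rw [map_mul] at h
  rw [Lvert, Lvert, h]
  split_ifs <;> simp [Lvert]

theorem Lse (e : Q.E) : Lvert k Q (Q.s e) * Ledge k Q e = Ledge k Q e := by
  have h := RingQuot.mkAlgHom_rel k (LeavittRel.se (k := k) (Q := Q) e)
  rw [map_mul] at h
  rw [Lvert, Ledge, h]

theorem Let (e : Q.E) : Ledge k Q e * Lvert k Q (Q.t e) = Ledge k Q e := by
  have h := RingQuot.mkAlgHom_rel k (LeavittRel.et (k := k) (Q := Q) e)
  rw [map_mul] at h
  rw [Lvert, Ledge, h]

theorem Ltg (e : Q.E) : Lvert k Q (Q.t e) * Lghost k Q e = Lghost k Q e := by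
  have h := RingQuot.mkAlgHom_rel k (LeavittRel.tg (k := k) (Q := Q) e)
  rw [map_mul] at h
  rw [Lvert, Lghost, h]

theorem Lgs (e : Q.E) : Lghost k Q e * Lvert k Q (Q.s e) = Lghost k Q e := by
  have h := RingQuot.mkAlgHom_rel k (LeavittRel.gs (k := k) (Q := Q) e)
  rw [map_mul] at h
  rw [Lvert, Lghost, h]

theorem Lgf (e f : Q.E) :
    Lghost k Q e * Ledge k Q f = if e = f then Lvert k Q (Q.t e) else 0 := by
  have h := RingQuot.mkAlgHom_rel k (LeavittRel.gf (k := k) (Q := Q) e f)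
  rw [map_mul] at h
  rw [Lghost, Ledge, h]
  split_ifs <;> simp [Lvert]

theorem vert_edge_zero (w : Q.V) (e : Q.E) (h : w ≠ Q.s e) :
    Lvert k Q w * Ledge k Q e = 0 := by
  rw [← Lse k Q e, ← mul_assoc, Lvv, if_neg h, zero_mul]

theorem vert_ghost_zero (w : Q.V) (e : Q.E) (h : w ≠ Q.t e) :
    Lvert k Q w * Lghost k Q e = 0 := by
  rw [← Ltg k Q e, ← mul_assoc, Lvv, if_neg h, zero_mul]

theorem ghost_vert_zero (e : Q.E) (w : Q.V) (h : Q.s e ≠ w) :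
    Lghost k Q e * Lvert k Q w = 0 := by
  rw [← Lgs k Q e, mul_assoc, Lvv, if_neg h, mul_zero]

/-! ### Path element lemmas -/

@[simp] theorem pathElem_nil (a : Q.V) : pathElem k Q (GPath.nil a) = Lvert k Q a := rfl

@[simp] theorem pathElem_cons (e : Q.E) {w : Q.V} (p : GPath Q (Q.t e) w) :
    pathElem k Q (GPath.cons e p) = Ledge k Q e * pathElem k Q p := rfl

@[simp] theorem ghostElem_nil (a : Q.V) : ghostElem k Q (GPath.nil a) = Lvert k Q a := rfl

@[simp] theorem ghostElem_cons (e : Q.E) {w : Q.V} (p : GPath Q (Q.t e) w) :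
    ghostElem k Q (GPath.cons e p) = ghostElem k Q p * Lghost k Q e := rfl

theorem vert_pathElem : ∀ {a w : Q.V} (x : GPath Q a w),
    Lvert k Q a * pathElem k Q x = pathElem k Q x
  | _, _, .nil a => by rw [pathElem_nil, Lvv, if_pos rfl]
  | _, _, .cons e p => by rw [pathElem_cons, ← mul_assoc, Lse]

theorem pathElem_vert : ∀ {a w : Q.V} (x : GPath Q a w),
    pathElem k Q x * Lvert k Q w = pathElem k Q x
  | _, _, .nil a => by rw [pathElem_nil, Lvv, if_pos rfl]
  | _, _, .cons e p => by rw [pathElem_cons, mul_assoc, pathElem_vert p]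

theorem vert_ghostElem : ∀ {b w : Q.V} (y : GPath Q b w),
    Lvert k Q w * ghostElem k Q y = ghostElem k Q y
  | _, _, .nil b => by rw [ghostElem_nil, Lvv, if_pos rfl]
  | _, _, .cons e p => by rw [ghostElem_cons, ← mul_assoc, vert_ghostElem p]

theorem ghostElem_vert : ∀ {b w : Q.V} (y : GPath Q b w),
    ghostElem k Q y * Lvert k Q b = ghostElem k Q y
  | _, _, .nil b => by rw [ghostElem_nil, Lvv, if_pos rfl]
  | _, _, .cons e p => by rw [ghostElem_cons, mul_assoc, Lgs]

theorem vert_pathElem_zero {a w : Q.V} (c : Q.V) (x : GPath Q a w) (h : c ≠ a) :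
    Lvert k Q c * pathElem k Q x = 0 := by
  rw [← vert_pathElem k Q x, ← mul_assoc, Lvv, if_neg h, zero_mul]

theorem edge_pathElem_zero {a w : Q.V} (e : Q.E) (x : GPath Q a w) (h : Q.t e ≠ a) :
    Ledge k Q e * pathElem k Q x = 0 := by
  rw [← Let k Q e, mul_assoc, vert_pathElem_zero k Q _ x h, mul_zero]

theorem ghostElem_vert_zero {b w : Q.V} (y : GPath Q b w) (c : Q.V) (h : b ≠ c) :
    ghostElem k Q y * Lvert k Q c = 0 := by
  rw [← ghostElem_vert k Q y, mul_assoc, Lvv, if_neg h, mul_zero]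

theorem pathElem_comp : ∀ {a b c : Q.V} (p : GPath Q a b) (q : GPath Q b c),
    pathElem k Q (p.comp q) = pathElem k Q p * pathElem k Q q
  | _, _, _, .nil _, q => by rw [GPath.comp, pathElem_nil, vert_pathElem]
  | _, _, _, .cons e p, q => by
      rw [GPath.comp, pathElem_cons, pathElem_cons, pathElem_comp p q, mul_assoc]

theorem ghostElem_comp : ∀ {a b c : Q.V} (p : GPath Q a b) (q : GPath Q b c),
    ghostElem k Q (p.comp q) = ghostElem k Q q * ghostElem k Q p
  | _, _, _, .nil _, q => by rw [GPath.comp, ghostElem_nil, ghostElem_vert]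
  | _, _, _, .cons e p, q => by
      rw [GPath.comp, ghostElem_cons, ghostElem_cons, ghostElem_comp p q, mul_assoc]

/-- Cast a path along equalities of its endpoints. -/
def GPath.cast {Q : LGraph} {a a' w w' : Q.V} (ha : a = a') (hw : w = w')
    (p : GPath Q a w) : GPath Q a' w' := ha ▸ hw ▸ p

theorem pathElem_cast {a a' w w' : Q.V} (ha : a = a') (hw : w = w') (p : GPath Q a w) :
    pathElem k Q (GPath.cast ha hw p) = pathElem k Q p := by
  subst ha; subst hw; rfl

theorem ghostElem_cast {a a' w w' : Q.V} (ha : a = a') (hw : w = w') (p : GPath Q a w) :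
    ghostElem k Q (GPath.cast ha hw p) = ghostElem k Q p := by
  subst ha; subst hw; rfl

/-- The set of elements `x y*` with `x, y` paths ending at `v`. -/
def pathSet (v : Q.V) : Set (LPA k Q) :=
  {z : LPA k Q | ∃ (a b : Q.V) (x : GPath Q a v) (y : GPath Q b v),
    z = pathElem k Q x * ghostElem k Q y}

/-- Left multiplication by a generator preserves the span of `pathSet`. -/
theorem gen_mul_pathSet_mem (v : Q.V) (hher : ∀ e, Q.s e = v → Q.t e = v) (g : LGen Q)
    {a b : Q.V} (x : GPath Q a v) (y : GPath Q b v) :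
    RingQuot.mkAlgHom k (LeavittRel k Q) (FreeAlgebra.ι k g) *
      (pathElem k Q x * ghostElem k Q y) ∈ Submodule.span k (pathSet k Q v) := by
  cases g with
  | vert w =>
    show Lvert k Q w * (pathElem k Q x * ghostElem k Q y) ∈ _
    by_cases h : w = a
    · subst h
      rw [← mul_assoc, vert_pathElem]
      exact Submodule.subset_span ⟨w, b, x, y, rfl⟩
    · rw [← mul_assoc, vert_pathElem_zero k Q _ x h, zero_mul]
      exact Submodule.zero_mem _
  | edge e =>
    show Ledge k Q e * (pathElem k Q x * ghostElem k Q y) ∈ _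
    by_cases h : Q.t e = a
    · subst h
      refine Submodule.subset_span ⟨Q.s e, b, GPath.cons e x, y, ?_⟩
      rw [pathElem_cons, mul_assoc]
    · rw [← mul_assoc, edge_pathElem_zero k Q e x h, zero_mul]
      exact Submodule.zero_mem _
  | ghost e =>
    show Lghost k Q e * (pathElem k Q x * ghostElem k Q y) ∈ _
    cases x with
    | nil =>
      by_cases h : Q.s e = v
      · have htv : Q.t e = v := hher e h
        set q : GPath Q v v :=
          GPath.cast h htv (GPath.cons e (GPath.nil (Q.t e))) with hqdef
        have hq : ghostElem k Q q = Lghost k Q e := by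
          rw [hqdef, ghostElem_cast, ghostElem_cons, ghostElem_nil, Ltg]
        refine Submodule.subset_span ⟨v, b, GPath.nil v, y.comp q, ?_⟩
        rw [pathElem_nil, vert_ghostElem k Q y, vert_ghostElem k Q (GPath.comp y q),
          ghostElem_comp, hq]
      · rw [pathElem_nil, ← mul_assoc, ghost_vert_zero k Q e v h, zero_mul]
        exact Submodule.zero_mem _
    | cons f p =>
      by_cases h : e = f
      · subst h
        refine Submodule.subset_span ⟨Q.t e, b, p, y, ?_⟩
        rw [pathElem_cons, ← mul_assoc, ← mul_assoc, Lgf, if_pos rfl, vert_pathElem]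
      · rw [pathElem_cons, ← mul_assoc, ← mul_assoc, Lgf, if_neg h, zero_mul, zero_mul]
        exact Submodule.zero_mem _

/-- Right multiplication by a generator preserves the span of `pathSet`. -/
theorem pathSet_mul_gen_mem (v : Q.V) (hher : ∀ e, Q.s e = v → Q.t e = v) (g : LGen Q)
    {a b : Q.V} (x : GPath Q a v) (y : GPath Q b v) :
    (pathElem k Q x * ghostElem k Q y) *
      RingQuot.mkAlgHom k (LeavittRel k Q) (FreeAlgebra.ι k g)
      ∈ Submodule.span k (pathSet k Q v) := by
  cases g with
  | vert w =>
    show (pathElem k Q x * ghostElem k Q y) * Lvert k Q w ∈ _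
    by_cases h : b = w
    · subst h
      rw [mul_assoc, ghostElem_vert]
      exact Submodule.subset_span ⟨a, _, x, y, rfl⟩
    · rw [mul_assoc, ghostElem_vert_zero k Q y w h, mul_zero]
      exact Submodule.zero_mem _
  | edge f =>
    show (pathElem k Q x * ghostElem k Q y) * Ledge k Q f ∈ _
    cases y with
    | nil =>
      by_cases h : Q.s f = v
      · have htv : Q.t f = v := hher f h
        set q : GPath Q v v :=
          GPath.cast h htv (GPath.cons f (GPath.nil (Q.t f))) with hqdef
        have hq : pathElem k Q q = Ledge k Q f := by
          rw [hqdef, pathElem_cast, pathElem_cons, pathElem_nil, Let]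
        refine Submodule.subset_span ⟨a, v, x.comp q, GPath.nil v, ?_⟩
        have h2 : Ledge k Q f * Lvert k Q v = Ledge k Q f := by rw [← htv, Let]
        rw [ghostElem_nil, pathElem_comp, hq, pathElem_vert, mul_assoc, h2]
      · rw [ghostElem_nil, mul_assoc,
          vert_edge_zero k Q v f (fun hh => h hh.symm), mul_zero]
        exact Submodule.zero_mem _
    | cons g p =>
      by_cases h : g = f
      · subst h
        refine Submodule.subset_span ⟨a, Q.t g, x, p, ?_⟩
        rw [ghostElem_cons, mul_assoc, mul_assoc, Lgf, if_pos rfl, ghostElem_vert]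
      · rw [ghostElem_cons, mul_assoc, mul_assoc, Lgf, if_neg h, mul_zero, mul_zero]
        exact Submodule.zero_mem _
  | ghost f =>
    show (pathElem k Q x * ghostElem k Q y) * Lghost k Q f ∈ _
    by_cases h : b = Q.t f
    · subst h
      refine Submodule.subset_span ⟨a, Q.s f, x, GPath.cons f y, ?_⟩
      rw [ghostElem_cons, mul_assoc]
    · rw [mul_assoc, ← ghostElem_vert k Q y, mul_assoc,
        vert_ghost_zero k Q b f h, mul_zero, mul_zero]
      exact Submodule.zero_mem _

theorem mul_span_pathSet_mem (v : Q.V) (hher : ∀ e, Q.s e = v → Q.t e = v)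
    (r m : LPA k Q) (hm : m ∈ Submodule.span k (pathSet k Q v)) :
    r * m ∈ Submodule.span k (pathSet k Q v) := by
  suffices h : ∀ r : FreeAlgebra k (LGen Q), ∀ m ∈ Submodule.span k (pathSet k Q v),
      RingQuot.mkAlgHom k (LeavittRel k Q) r * m ∈ Submodule.span k (pathSet k Q v) by
    obtain ⟨r, rfl⟩ := RingQuot.mkAlgHom_surjective k (LeavittRel k Q) r
    exact h r m hm
  intro r
  induction r using FreeAlgebra.induction with
  | grade0 c =>
    intro m hm
    rw [AlgHom.commutes, ← Algebra.smul_def]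
    exact Submodule.smul_mem _ c hm
  | grade1 g =>
    intro m hm
    refine Submodule.span_induction (p := fun z _ =>
        RingQuot.mkAlgHom k (LeavittRel k Q) (FreeAlgebra.ι k g) * z ∈
          Submodule.span k (pathSet k Q v)) ?_ ?_ ?_ ?_ hm
    · rintro z ⟨a, b, x, y, rfl⟩
      exact gen_mul_pathSet_mem k Q v hher g x y
    · simp only [mul_zero]; exact Submodule.zero_mem _
    · intro z w _ _ hz hw; simp only [mul_add]; exact Submodule.add_mem _ hz hw
    · intro c z _ hz; simp only [mul_smul_comm]; exact Submodule.smul_mem _ c hz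
  | mul p q hp hq =>
    intro m hm
    rw [map_mul, mul_assoc]
    exact hp _ (hq m hm)
  | add p q hp hq =>
    intro m hm
    rw [map_add, add_mul]
    exact Submodule.add_mem _ (hp m hm) (hq m hm)

theorem span_pathSet_mul_mem (v : Q.V) (hher : ∀ e, Q.s e = v → Q.t e = v)
    (r m : LPA k Q) (hm : m ∈ Submodule.span k (pathSet k Q v)) :
    m * r ∈ Submodule.span k (pathSet k Q v) := by
  suffices h : ∀ r : FreeAlgebra k (LGen Q), ∀ m ∈ Submodule.span k (pathSet k Q v),
      m * RingQuot.mkAlgHom k (LeavittRel k Q) r ∈ Submodule.span k (pathSet k Q v) by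
    obtain ⟨r, rfl⟩ := RingQuot.mkAlgHom_surjective k (LeavittRel k Q) r
    exact h r m hm
  intro r
  induction r using FreeAlgebra.induction with
  | grade0 c =>
    intro m hm
    rw [AlgHom.commutes, ← Algebra.commutes, ← Algebra.smul_def]
    exact Submodule.smul_mem _ c hm
  | grade1 g =>
    intro m hm
    refine Submodule.span_induction (p := fun z _ =>
        z * RingQuot.mkAlgHom k (LeavittRel k Q) (FreeAlgebra.ι k g) ∈
          Submodule.span k (pathSet k Q v)) ?_ ?_ ?_ ?_ hm
    · rintro z ⟨a, b, x, y, rfl⟩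
      exact pathSet_mul_gen_mem k Q v hher g x y
    · simp only [zero_mul]; exact Submodule.zero_mem _
    · intro z w _ _ hz hw; simp only [add_mul]; exact Submodule.add_mem _ hz hw
    · intro c z _ hz; simp only [smul_mul_assoc]; exact Submodule.smul_mem _ c hz
  | mul p q hp hq =>
    intro m hm
    rw [map_mul, ← mul_assoc]
    exact hq _ (hp m hm)
  | add p q hp hq =>
    intro m hm
    rw [map_add, mul_add]
    exact Submodule.add_mem _ (hp m hm) (hq m hm)

end AuxLemmas

/-- For a vertex `v` that is a sink or the base of a loop, with `{v}` hereditary,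
the two-sided ideal `I(v)` of `L_k(Q)` generated by `v` equals the `k`-linear span of
the elements `x y*` where `x`, `y` are finite paths both ending at `v`. -/
theorem ideal_of_hereditary_vertex (k : Type) [Field k] (Q : LGraph)
    [DecidableEq Q.V] [DecidableEq Q.E] (v : Q.V)
    (hher : ∀ e, Q.s e = v → Q.t e = v)
    (hsink_or_loop : (∀ e, Q.s e ≠ v) ∨ ∃ e, Q.s e = v ∧ Q.t e = v) :
    ((TwoSidedIdeal.span {Lvert k Q v} : TwoSidedIdeal (LPA k Q)) : Set (LPA k Q)) =
      (Submodule.span k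
        {z : LPA k Q | ∃ (a b : Q.V) (x : GPath Q a v) (y : GPath Q b v),
          z = pathElem k Q x * ghostElem k Q y} : Set (LPA k Q)) := by
  ext z
  simp only [SetLike.mem_coe]
  constructor
  · intro hz
    let J : TwoSidedIdeal (LPA k Q) := TwoSidedIdeal.mk'
      ((Submodule.span k (pathSet k Q v) : Submodule k (LPA k Q)) : Set (LPA k Q))
      (Submodule.zero_mem _)
      (fun hx hy => Submodule.add_mem _ hx hy)
      (fun hx => Submodule.neg_mem _ hx)
      (fun {r m} hm => mul_span_pathSet_mem k Q v hher r m hm)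
      (fun {m r} hm => span_pathSet_mul_mem k Q v hher r m hm)
    have hsub : ({Lvert k Q v} : Set (LPA k Q)) ⊆ J := by
      intro w hw
      rw [Set.mem_singleton_iff] at hw
      subst hw
      rw [SetLike.mem_coe, TwoSidedIdeal.mem_mk']
      exact Submodule.subset_span ⟨v, v, GPath.nil v, GPath.nil v,
        by rw [pathElem_nil, ghostElem_nil, Lvv, if_pos rfl]⟩
    have := TwoSidedIdeal.mem_span_iff.mp hz J hsub
    rwa [TwoSidedIdeal.mem_mk'] at this
  · intro hz
    refine Submodule.span_induction (p := fun w _ =>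
        w ∈ TwoSidedIdeal.span {Lvert k Q v}) ?_ ?_ ?_ ?_ hz
    · rintro w ⟨a, b, x, y, rfl⟩
      have hv : Lvert k Q v ∈ TwoSidedIdeal.span {Lvert k Q v} :=
        TwoSidedIdeal.subset_span rfl
      have : pathElem k Q x * ghostElem k Q y =
          pathElem k Q x * (Lvert k Q v * ghostElem k Q y) := by
        rw [vert_ghostElem]
      rw [this]
      exact TwoSidedIdeal.mul_mem_left _ _ _
        (TwoSidedIdeal.mul_mem_right _ _ _ hv)
    · exact TwoSidedIdeal.zero_mem _
    · intro x y _ _ hx hy; exact TwoSidedIdeal.add_mem _ hx hy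
    · intro c x _ hx
      simp only [Algebra.smul_def]
      exact TwoSidedIdeal.mul_mem_left _ _ _ hx

end Graph
end
end

section
/- Let Q be a (Q',v0)-trimmable graph over a field k. Then the assignment π1 sending each generator α ∈ Q'_0 ∪ Q'_1 ∪ (Q'_1)* of L_k(Q) to itself in L_k(Q'), and all other generators (v0, edges into v0, and their ghost edges) to 0, extends to a well-defined surjective Z-graded algebra homomorphism π1 : L_k(Q) → L_k(Q'). -/
open scoped TensorProduct

noncomputable section

structure QGraph where
  V : Type
  E : Type
  s : E → V
  t : E → V

namespace QGraph

/-- Generators of the Leavitt path algebra: vertices, edges, and ghost edges. -/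
inductive LGen (Q : QGraph) : Type
  | vert : Q.V → LGen Q
  | edge : Q.E → LGen Q
  | ghost : Q.E → LGen Q

/-- The degree of a generator: vertices have degree 0, edges degree 1,
ghost edges degree -1. -/
def gdeg {Q : QGraph} : LGen Q → ℤ
  | .vert _ => 0
  | .edge _ => 1
  | .ghost _ => -1

open LGen in
/-- The Leavitt path algebra relations (L1)-(L5). -/
inductive LeavittRel (k : Type) [CommRing k] (Q : QGraph) [DecidableEq Q.V] [DecidableEq Q.E] :
    FreeAlgebra k (LGen Q) → FreeAlgebra k (LGen Q) → Prop
  | vv (v w : Q.V) : LeavittRel k Q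
      (FreeAlgebra.ι k (vert v) * FreeAlgebra.ι k (vert w))
      (if v = w then FreeAlgebra.ι k (vert v) else 0)
  | se (e : Q.E) : LeavittRel k Q
      (FreeAlgebra.ι k (vert (Q.s e)) * FreeAlgebra.ι k (edge e)) (FreeAlgebra.ι k (edge e))
  | et (e : Q.E) : LeavittRel k Q
      (FreeAlgebra.ι k (edge e) * FreeAlgebra.ι k (vert (Q.t e))) (FreeAlgebra.ι k (edge e))
  | tg (e : Q.E) : LeavittRel k Q
      (FreeAlgebra.ι k (vert (Q.t e)) * FreeAlgebra.ι k (ghost e)) (FreeAlgebra.ι k (ghost e))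
  | gs (e : Q.E) : LeavittRel k Q
      (FreeAlgebra.ι k (ghost e) * FreeAlgebra.ι k (vert (Q.s e))) (FreeAlgebra.ι k (ghost e))
  | gf (e f : Q.E) : LeavittRel k Q
      (FreeAlgebra.ι k (ghost e) * FreeAlgebra.ι k (edge f))
      (if e = f then FreeAlgebra.ι k (vert (Q.t e)) else 0)
  | ck (v : Q.V) (h : {e : Q.E | Q.s e = v}.Finite) (hne : {e : Q.E | Q.s e = v}.Nonempty) :
      LeavittRel k Q
        (∑ e ∈ h.toFinset, FreeAlgebra.ι k (edge e) * FreeAlgebra.ι k (ghost e))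
        (FreeAlgebra.ι k (vert v))

/-- The Leavitt path algebra of a graph `Q` over `k`. -/
abbrev LPA (k : Type) [CommRing k] (Q : QGraph) [DecidableEq Q.V] [DecidableEq Q.E] : Type :=
  RingQuot (LeavittRel k Q)

variable (k : Type) [CommRing k] (Q : QGraph) [DecidableEq Q.V] [DecidableEq Q.E]

/-- The vertex generators of the Leavitt path algebra. -/
def Lvert (v : Q.V) : LPA k Q :=
  RingQuot.mkAlgHom k (LeavittRel k Q) (FreeAlgebra.ι k (.vert v))

/-- The edge generators of the Leavitt path algebra. -/
def Ledge (e : Q.E) : LPA k Q :=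
  RingQuot.mkAlgHom k (LeavittRel k Q) (FreeAlgebra.ι k (.edge e))

/-- The ghost-edge generators of the Leavitt path algebra. -/
def Lghost (e : Q.E) : LPA k Q :=
  RingQuot.mkAlgHom k (LeavittRel k Q) (FreeAlgebra.ι k (.ghost e))

/-- The `n`-th homogeneous component of the standard `ℤ`-grading of the Leavitt
path algebra: spanned by monomials in the generators of total degree `n`, where
edges have degree `1`, ghost edges degree `-1` and vertices degree `0`. -/
def homComp (n : ℤ) : Submodule k (LPA k Q) :=
  Submodule.span k { a : LPA k Q | ∃ l : List (LGen Q), (l.map gdeg).sum = n ∧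
    a = RingQuot.mkAlgHom k (LeavittRel k Q) ((l.map (FreeAlgebra.ι k)).prod) }

/-- Paths in a graph, from a vertex to a vertex. -/
inductive GPath (Q : QGraph) : Q.V → Q.V → Type
  | nil (v : Q.V) : GPath Q v v
  | cons (e : Q.E) {w : Q.V} (p : GPath Q (Q.t e) w) : GPath Q (Q.s e) w

/-- Length of a path. -/
def GPath.length {Q : QGraph} : ∀ {v w : Q.V}, GPath Q v w → ℕ
  | _, _, .nil _ => 0
  | _, _, .cons _ p => p.length + 1

/-- Concatenation of composable paths. -/
def GPath.comp {Q : QGraph} : ∀ {u v w : Q.V}, GPath Q u v → GPath Q v w → GPath Q u w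
  | _, _, _, .nil _, q => q
  | _, _, _, .cons e p, q => .cons e (p.comp q)

/-- The element of the Leavitt path algebra corresponding to a path. -/
def pathElem : ∀ {v w : Q.V}, GPath Q v w → LPA k Q
  | _, _, .nil v => Lvert k Q v
  | _, _, .cons e p => Ledge k Q e * pathElem p

/-- The element of the Leavitt path algebra corresponding to the reversed ghost path `y*`. -/
def ghostElem : ∀ {v w : Q.V}, GPath Q v w → LPA k Q
  | _, _, .nil v => Lvert k Q v
  | _, _, .cons e p => ghostElem p * Lghost k Q e

/-- The graph `Q \ {v₀}`: remove the vertex `v₀` and all edges ending at `v₀`.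
This needs `{v₀}` to be hereditary, i.e. every edge emitted by `v₀` ends at `v₀`. -/
def deleteVertex (Q : QGraph) (v₀ : Q.V) (h : ∀ e, Q.s e = v₀ → Q.t e = v₀) : QGraph where
  V := {v : Q.V // v ≠ v₀}
  E := {e : Q.E // Q.t e ≠ v₀}
  s e := ⟨Q.s e.1, fun hs => e.2 (h e.1 hs)⟩
  t e := ⟨Q.t e.1, e.2⟩

/-- The graph obtained by removing a single edge `x₀`. -/
def deleteEdge (Q : QGraph) (x₀ : Q.E) : QGraph where
  V := Q.V
  E := {e : Q.E // e ≠ x₀}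
  s e := Q.s e.1
  t e := Q.t e.1


instance (Q : QGraph) [DecidableEq Q.V] (v₀ : Q.V) (h : ∀ e, Q.s e = v₀ → Q.t e = v₀) :
    DecidableEq (Q.deleteVertex v₀ h).V :=
  inferInstanceAs (DecidableEq {v : Q.V // v ≠ v₀})

instance (Q : QGraph) [DecidableEq Q.E] (v₀ : Q.V) (h : ∀ e, Q.s e = v₀ → Q.t e = v₀) :
    DecidableEq (Q.deleteVertex v₀ h).E :=
  inferInstanceAs (DecidableEq {e : Q.E // Q.t e ≠ v₀})

instance (Q : QGraph) [DecidableEq Q.V] (x₀ : Q.E) : DecidableEq (Q.deleteEdge x₀).V :=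
  inferInstanceAs (DecidableEq Q.V)

instance (Q : QGraph) [DecidableEq Q.E] (x₀ : Q.E) : DecidableEq (Q.deleteEdge x₀).E :=
  inferInstanceAs (DecidableEq {e : Q.E // e ≠ x₀})

/-- A graph `Q` is `(Q', v₀)`-trimmable, where `Q'` is the subgraph obtained by removing
`v₀` and all edges ending in `v₀`: the only edge emitted by `v₀` is a loop `x₀` at `v₀`,
at least one other edge ends at `v₀`, and every vertex emitting an edge into `v₀`
also emits an edge ending inside `Q'`. -/
structure IsTrimmable (Q : QGraph) (v₀ : Q.V) (x₀ : Q.E) : Prop where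
  loop_src : Q.s x₀ = v₀
  loop_tgt : Q.t x₀ = v₀
  only_out : ∀ e, Q.s e = v₀ → e = x₀
  exists_into : ∃ e, Q.t e = v₀ ∧ e ≠ x₀
  no_new_sinks : ∀ e, Q.t e = v₀ → e ≠ x₀ → ∃ e', Q.s e' = Q.s e ∧ Q.t e' ≠ v₀

/-- In a trimmable graph, `{v₀}` is hereditary. -/
theorem IsTrimmable.her {Q : QGraph} {v₀ : Q.V} {x₀ : Q.E} (h : IsTrimmable Q v₀ x₀) :
    ∀ e, Q.s e = v₀ → Q.t e = v₀ := fun e hs => by rw [h.only_out e hs]; exact h.loop_tgt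

/-- The `n`-th homogeneous component of `A ⊗ k[u,u⁻¹]` for the grading given by the
degree on the Laurent polynomial tensorand: elements of the form `a ⊗ uⁿ`. -/
def tensorGrade (k A : Type) [CommRing k] [Ring A] [Algebra k A] (n : ℤ) :
    Submodule k (A ⊗[k] LaurentPolynomial k) :=
  LinearMap.range ((TensorProduct.mk k A (LaurentPolynomial k)).flip (LaurentPolynomial.T n))

section Pi1

theorem lpa_vv (v w : Q.V) :
    Lvert k Q v * Lvert k Q w = if v = w then Lvert k Q v else 0 := by
  have h := RingQuot.mkAlgHom_rel k (LeavittRel.vv (k := k) (Q := Q) v w)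
  simpa [Lvert, apply_ite (RingQuot.mkAlgHom k (LeavittRel k Q))] using h

theorem lpa_se (e : Q.E) :
    Lvert k Q (Q.s e) * Ledge k Q e = Ledge k Q e := by
  have h := RingQuot.mkAlgHom_rel k (LeavittRel.se (k := k) (Q := Q) e)
  simpa [Lvert, Ledge] using h

theorem lpa_et (e : Q.E) :
    Ledge k Q e * Lvert k Q (Q.t e) = Ledge k Q e := by
  have h := RingQuot.mkAlgHom_rel k (LeavittRel.et (k := k) (Q := Q) e)
  simpa [Lvert, Ledge] using h

theorem lpa_tg (e : Q.E) :
    Lvert k Q (Q.t e) * Lghost k Q e = Lghost k Q e := by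
  have h := RingQuot.mkAlgHom_rel k (LeavittRel.tg (k := k) (Q := Q) e)
  simpa [Lvert, Lghost] using h

theorem lpa_gs (e : Q.E) :
    Lghost k Q e * Lvert k Q (Q.s e) = Lghost k Q e := by
  have h := RingQuot.mkAlgHom_rel k (LeavittRel.gs (k := k) (Q := Q) e)
  simpa [Lvert, Lghost] using h

theorem lpa_gf (e f : Q.E) :
    Lghost k Q e * Ledge k Q f = if e = f then Lvert k Q (Q.t e) else 0 := by
  have h := RingQuot.mkAlgHom_rel k (LeavittRel.gf (k := k) (Q := Q) e f)
  simpa [Lvert, Ledge, Lghost, apply_ite (RingQuot.mkAlgHom k (LeavittRel k Q))] using h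

theorem lpa_ck (v : Q.V) (h : {e : Q.E | Q.s e = v}.Finite)
    (hne : {e : Q.E | Q.s e = v}.Nonempty) :
    ∑ e ∈ h.toFinset, Ledge k Q e * Lghost k Q e = Lvert k Q v := by
  have h' := RingQuot.mkAlgHom_rel k (LeavittRel.ck (k := k) (Q := Q) v h hne)
  simpa [Lvert, Ledge, Lghost] using h'

/-- The map on generators: generators coming from the subgraph go to themselves,
everything else to `0`. -/
def trimGenMap (v₀ : Q.V) (hher : ∀ e, Q.s e = v₀ → Q.t e = v₀) :
    LGen Q → LPA k (Q.deleteVertex v₀ hher)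
  | .vert v => if hv : v = v₀ then 0 else Lvert k (Q.deleteVertex v₀ hher) ⟨v, hv⟩
  | .edge e => if he : Q.t e = v₀ then 0 else Ledge k (Q.deleteVertex v₀ hher) ⟨e, he⟩
  | .ghost e => if he : Q.t e = v₀ then 0 else Lghost k (Q.deleteVertex v₀ hher) ⟨e, he⟩

theorem trimGenMap_vert (v₀ : Q.V) (hher : ∀ e, Q.s e = v₀ → Q.t e = v₀) (v : Q.V) :
    trimGenMap k Q v₀ hher (.vert v) =
      if hv : v = v₀ then 0 else Lvert k (Q.deleteVertex v₀ hher) ⟨v, hv⟩ := rfl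

theorem trimGenMap_edge (v₀ : Q.V) (hher : ∀ e, Q.s e = v₀ → Q.t e = v₀) (e : Q.E) :
    trimGenMap k Q v₀ hher (.edge e) =
      if he : Q.t e = v₀ then 0 else Ledge k (Q.deleteVertex v₀ hher) ⟨e, he⟩ := rfl

theorem trimGenMap_ghost (v₀ : Q.V) (hher : ∀ e, Q.s e = v₀ → Q.t e = v₀) (e : Q.E) :
    trimGenMap k Q v₀ hher (.ghost e) =
      if he : Q.t e = v₀ then 0 else Lghost k (Q.deleteVertex v₀ hher) ⟨e, he⟩ := rfl

theorem trim_rel (v₀ : Q.V) (x₀ : Q.E) (hT : IsTrimmable Q v₀ x₀) [Fintype Q.E] :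
    ∀ ⦃a b⦄, LeavittRel k Q a b →
      FreeAlgebra.lift k (trimGenMap k Q v₀ hT.her) a =
        FreeAlgebra.lift k (trimGenMap k Q v₀ hT.her) b := by
  intro a b hab
  induction hab with
  | vv v w =>
      rcases eq_or_ne v w with rfl | hvw
      · rw [if_pos rfl]
        simp only [map_mul, FreeAlgebra.lift_ι_apply, trimGenMap_vert]
        split_ifs with hv
        · simp
        · erw [lpa_vv, if_pos rfl]
      · rw [if_neg hvw, map_zero]
        simp only [map_mul, FreeAlgebra.lift_ι_apply, trimGenMap_vert]
        split_ifs with h1 h2 <;> simp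
        erw [lpa_vv, if_neg]
        exact fun h => hvw (congrArg Subtype.val h)
  | se e =>
      simp only [map_mul, FreeAlgebra.lift_ι_apply, trimGenMap_vert, trimGenMap_edge]
      by_cases he : Q.t e = v₀
      · simp [he]
      · have hs : Q.s e ≠ v₀ := fun h => he (hT.her e h)
        rw [dif_neg hs, dif_neg he]
        simpa [deleteVertex] using lpa_se k (Q.deleteVertex v₀ hT.her) ⟨e, he⟩
  | et e =>
      simp only [map_mul, FreeAlgebra.lift_ι_apply, trimGenMap_vert, trimGenMap_edge]
      by_cases he : Q.t e = v₀
      · simp [he]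
      · rw [dif_neg he, dif_neg he]
        simpa [deleteVertex] using lpa_et k (Q.deleteVertex v₀ hT.her) ⟨e, he⟩
  | tg e =>
      simp only [map_mul, FreeAlgebra.lift_ι_apply, trimGenMap_vert, trimGenMap_ghost]
      by_cases he : Q.t e = v₀
      · simp [he]
      · rw [dif_neg he, dif_neg he]
        simpa [deleteVertex] using lpa_tg k (Q.deleteVertex v₀ hT.her) ⟨e, he⟩
  | gs e =>
      simp only [map_mul, FreeAlgebra.lift_ι_apply, trimGenMap_vert, trimGenMap_ghost]
      by_cases he : Q.t e = v₀
      · simp [he]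
      · have hs : Q.s e ≠ v₀ := fun h => he (hT.her e h)
        rw [dif_neg hs, dif_neg he]
        simpa [deleteVertex] using lpa_gs k (Q.deleteVertex v₀ hT.her) ⟨e, he⟩
  | gf e f =>
      rcases eq_or_ne e f with rfl | hef
      · rw [if_pos rfl]
        simp only [map_mul, FreeAlgebra.lift_ι_apply, trimGenMap_vert, trimGenMap_edge,
          trimGenMap_ghost]
        by_cases he : Q.t e = v₀
        · simp [he]
        · rw [dif_neg he, dif_neg he, dif_neg he]
          simpa [deleteVertex] using
            lpa_gf k (Q.deleteVertex v₀ hT.her) ⟨e, he⟩ ⟨e, he⟩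
      · rw [if_neg hef, map_zero]
        simp only [map_mul, FreeAlgebra.lift_ι_apply, trimGenMap_edge, trimGenMap_ghost]
        split_ifs with h1 h2 <;> simp
        erw [lpa_gf, if_neg]
        exact fun h => hef (congrArg Subtype.val h)
  | ck v hfin hne =>
      rw [map_sum, FreeAlgebra.lift_ι_apply, trimGenMap_vert]
      by_cases hv : v = v₀
      · rw [dif_pos hv, Finset.sum_eq_zero]
        intro e he
        have hse : Q.s e = v₀ := by
          have := (Set.Finite.mem_toFinset hfin).1 he
          simpa [hv] using this
        have hte : Q.t e = v₀ := hT.her e hse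
        rw [map_mul, FreeAlgebra.lift_ι_apply, trimGenMap_edge, dif_pos hte, zero_mul]
      · haveI : Finite (Q.deleteVertex v₀ hT.her).E :=
          inferInstanceAs (Finite {e : Q.E // Q.t e ≠ v₀})
        have hfin' : {e : (Q.deleteVertex v₀ hT.her).E |
            (Q.deleteVertex v₀ hT.her).s e = ⟨v, hv⟩}.Finite := Set.toFinite _
        have hne' : {e : (Q.deleteVertex v₀ hT.her).E |
            (Q.deleteVertex v₀ hT.her).s e = ⟨v, hv⟩}.Nonempty := by
          obtain ⟨e, he⟩ := hne
          have hse : Q.s e = v := he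
          by_cases hte : Q.t e = v₀
          · have hex : e ≠ x₀ := fun h => hv (by rw [← hse, h, hT.loop_src])
            obtain ⟨e', hs', ht'⟩ := hT.no_new_sinks e hte hex
            exact ⟨⟨e', ht'⟩, Subtype.ext (by simpa [deleteVertex, hse] using hs')⟩
          · exact ⟨⟨e, hte⟩, Subtype.ext (by simpa [deleteVertex] using hse)⟩
        have hck := lpa_ck k (Q.deleteVertex v₀ hT.her) ⟨v, hv⟩ hfin' hne'
        rw [dif_neg hv, ← hck]
        have hmap : hfin'.toFinset.map ⟨Subtype.val, Subtype.val_injective⟩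
            = hfin.toFinset.filter (fun e => Q.t e ≠ v₀) := by
          ext e
          erw [Finset.mem_map]
          simp only [Finset.mem_map, Set.Finite.mem_toFinset, Finset.mem_filter,
            Function.Embedding.coeFn_mk, Set.mem_setOf_eq]
          constructor
          · rintro ⟨e', hs', rfl⟩
            exact ⟨congrArg Subtype.val (show (Q.deleteVertex v₀ hT.her).s e' = ⟨v, hv⟩ from
              (Set.Finite.mem_toFinset hfin').1 hs'), e'.2⟩
          · rintro ⟨hs, ht⟩
            exact ⟨⟨e, ht⟩, (Set.Finite.mem_toFinset _).2 (Subtype.ext hs), rfl⟩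
        rw [← Finset.sum_filter_of_ne (p := fun e => Q.t e ≠ v₀)
            (fun e _ h0 hte => h0 (by
              rw [map_mul, FreeAlgebra.lift_ι_apply, trimGenMap_edge, dif_pos hte,
                zero_mul])),
          ← hmap]
        erw [Finset.sum_map]
        refine Finset.sum_congr rfl fun e' _ => ?_
        rw [map_mul, FreeAlgebra.lift_ι_apply, FreeAlgebra.lift_ι_apply,
          trimGenMap_edge, trimGenMap_ghost]
        simp only [Function.Embedding.coeFn_mk]
        rw [dif_neg e'.2, dif_neg e'.2]

end Pi1

/-- For a `(Q',v₀)`-trimmable graph `Q` (where `Q' = Q \ {v₀}`), the assignment sending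
the generators coming from `Q'` to themselves and all other generators (`v₀`, edges
into `v₀`, and their ghost edges) to `0` extends to a well-defined surjective
`ℤ`-graded algebra homomorphism `π₁ : L_k(Q) → L_k(Q')`. -/
theorem _root_.Graph.exists_pi1 (k : Type) [Field k] (Q : QGraph)
    [DecidableEq Q.V] [DecidableEq Q.E] [Fintype Q.V] [Fintype Q.E]
    (v₀ : Q.V) (x₀ : Q.E) (hT : IsTrimmable Q v₀ x₀) :
    ∃ π₁ : LPA k Q →ₐ[k] LPA k (Q.deleteVertex v₀ hT.her),
      (∀ (v : Q.V) (hv : v ≠ v₀),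
        π₁ (Lvert k Q v) = Lvert k (Q.deleteVertex v₀ hT.her) ⟨v, hv⟩) ∧
      π₁ (Lvert k Q v₀) = 0 ∧
      (∀ (e : Q.E) (he : Q.t e ≠ v₀),
        π₁ (Ledge k Q e) = Ledge k (Q.deleteVertex v₀ hT.her) ⟨e, he⟩) ∧
      (∀ e : Q.E, Q.t e = v₀ → π₁ (Ledge k Q e) = 0) ∧
      (∀ (e : Q.E) (he : Q.t e ≠ v₀),
        π₁ (Lghost k Q e) = Lghost k (Q.deleteVertex v₀ hT.her) ⟨e, he⟩) ∧
      (∀ e : Q.E, Q.t e = v₀ → π₁ (Lghost k Q e) = 0) ∧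
      Function.Surjective π₁ ∧
      (∀ n : ℤ, ∀ a ∈ homComp k Q n, π₁ a ∈ homComp k (Q.deleteVertex v₀ hT.her) n) := by
  classical
  set π₁ : LPA k Q →ₐ[k] LPA k (Q.deleteVertex v₀ hT.her) :=
    RingQuot.liftAlgHom k ⟨FreeAlgebra.lift k (trimGenMap k Q v₀ hT.her),
      trim_rel k Q v₀ x₀ hT⟩ with hπ
  have hmk : ∀ x : FreeAlgebra k (LGen Q),
      π₁ (RingQuot.mkAlgHom k (LeavittRel k Q) x) =
        FreeAlgebra.lift k (trimGenMap k Q v₀ hT.her) x := fun x =>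
    RingQuot.liftAlgHom_mkAlgHom_apply k _ _ x
  have hvert : ∀ (v : Q.V) (hv : v ≠ v₀),
      π₁ (Lvert k Q v) = Lvert k (Q.deleteVertex v₀ hT.her) ⟨v, hv⟩ := by
    intro v hv
    rw [Lvert, hmk, FreeAlgebra.lift_ι_apply, trimGenMap_vert, dif_neg hv]
  have hvert0 : π₁ (Lvert k Q v₀) = 0 := by
    rw [Lvert, hmk, FreeAlgebra.lift_ι_apply, trimGenMap_vert, dif_pos rfl]
  have hedge : ∀ (e : Q.E) (he : Q.t e ≠ v₀),
      π₁ (Ledge k Q e) = Ledge k (Q.deleteVertex v₀ hT.her) ⟨e, he⟩ := by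
    intro e he
    rw [Ledge, hmk, FreeAlgebra.lift_ι_apply, trimGenMap_edge, dif_neg he]
  have hedge0 : ∀ e : Q.E, Q.t e = v₀ → π₁ (Ledge k Q e) = 0 := by
    intro e he
    rw [Ledge, hmk, FreeAlgebra.lift_ι_apply, trimGenMap_edge, dif_pos he]
  have hghost : ∀ (e : Q.E) (he : Q.t e ≠ v₀),
      π₁ (Lghost k Q e) = Lghost k (Q.deleteVertex v₀ hT.her) ⟨e, he⟩ := by
    intro e he
    rw [Lghost, hmk, FreeAlgebra.lift_ι_apply, trimGenMap_ghost, dif_neg he]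
  have hghost0 : ∀ e : Q.E, Q.t e = v₀ → π₁ (Lghost k Q e) = 0 := by
    intro e he
    rw [Lghost, hmk, FreeAlgebra.lift_ι_apply, trimGenMap_ghost, dif_pos he]
  -- surjectivity
  have hsurj : Function.Surjective π₁ := by
    intro y
    obtain ⟨z, rfl⟩ :=
      RingQuot.mkAlgHom_surjective k (LeavittRel k (Q.deleteVertex v₀ hT.her)) y
    have hz : z ∈ Algebra.adjoin k
        (Set.range (FreeAlgebra.ι k (X := LGen (Q.deleteVertex v₀ hT.her)))) := by
      rw [FreeAlgebra.adjoin_range_ι]; exact Algebra.mem_top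
    have hmem : RingQuot.mkAlgHom k (LeavittRel k (Q.deleteVertex v₀ hT.her)) z ∈
        (Algebra.adjoin k (Set.range (FreeAlgebra.ι k))).map
          (RingQuot.mkAlgHom k (LeavittRel k (Q.deleteVertex v₀ hT.her))) :=
      ⟨z, hz, rfl⟩
    rw [AlgHom.map_adjoin] at hmem
    have hsub : (RingQuot.mkAlgHom k (LeavittRel k (Q.deleteVertex v₀ hT.her))) ''
        (Set.range (FreeAlgebra.ι k)) ⊆ (π₁.range : Set (LPA k (Q.deleteVertex v₀ hT.her))) := by
      rintro _ ⟨_, ⟨g, rfl⟩, rfl⟩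
      cases g with
      | vert v => exact ⟨Lvert k Q v.1, (hvert v.1 v.2).trans rfl⟩
      | edge e => exact ⟨Ledge k Q e.1, (hedge e.1 e.2).trans rfl⟩
      | ghost e => exact ⟨Lghost k Q e.1, (hghost e.1 e.2).trans rfl⟩
    have := Algebra.adjoin_le hsub hmem
    exact this
  -- grading
  have hkey : ∀ l : List (LGen Q),
      π₁ (RingQuot.mkAlgHom k (LeavittRel k Q) ((l.map (FreeAlgebra.ι k)).prod)) = 0 ∨
      ∃ l' : List (LGen (Q.deleteVertex v₀ hT.her)),
        l'.map gdeg = l.map gdeg ∧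
        π₁ (RingQuot.mkAlgHom k (LeavittRel k Q) ((l.map (FreeAlgebra.ι k)).prod)) =
          RingQuot.mkAlgHom k (LeavittRel k (Q.deleteVertex v₀ hT.her))
            ((l'.map (FreeAlgebra.ι k)).prod) := by
    intro l
    induction l with
    | nil =>
        right
        refine ⟨[], rfl, ?_⟩
        simp only [List.map_nil, List.prod_nil, map_one]
    | cons a l ih =>
        have hgen : trimGenMap k Q v₀ hT.her a = 0 ∨
            ∃ a' : LGen (Q.deleteVertex v₀ hT.her), gdeg a' = gdeg a ∧
              trimGenMap k Q v₀ hT.her a =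
                RingQuot.mkAlgHom k (LeavittRel k (Q.deleteVertex v₀ hT.her))
                  (FreeAlgebra.ι k a') := by
          cases a with
          | vert v =>
              by_cases hv : v = v₀
              · left; rw [trimGenMap_vert, dif_pos hv]
              · right; exact ⟨.vert ⟨v, hv⟩, rfl, by rw [trimGenMap_vert, dif_neg hv]; rfl⟩
          | edge e =>
              by_cases he : Q.t e = v₀
              · left; rw [trimGenMap_edge, dif_pos he]
              · right; exact ⟨.edge ⟨e, he⟩, rfl, by rw [trimGenMap_edge, dif_neg he]; rfl⟩
          | ghost e =>
              by_cases he : Q.t e = v₀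
              · left; rw [trimGenMap_ghost, dif_pos he]
              · right; exact ⟨.ghost ⟨e, he⟩, rfl, by rw [trimGenMap_ghost, dif_neg he]; rfl⟩
        have hsplit : π₁ (RingQuot.mkAlgHom k (LeavittRel k Q)
              (((a :: l).map (FreeAlgebra.ι k)).prod)) =
            trimGenMap k Q v₀ hT.her a *
              π₁ (RingQuot.mkAlgHom k (LeavittRel k Q) ((l.map (FreeAlgebra.ι k)).prod)) := by
          rw [List.map_cons, List.prod_cons, map_mul, map_mul, hmk, hmk,
            FreeAlgebra.lift_ι_apply]
        rcases hgen with h0 | ⟨a', hd, ha'⟩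
        · left; rw [hsplit, h0, zero_mul]
        · rcases ih with h0 | ⟨l', hd', hl'⟩
          · left; rw [hsplit, h0, mul_zero]
          · right
            refine ⟨a' :: l', ?_, ?_⟩
            · simp [hd, hd']
            · rw [hsplit, ha', hl', List.map_cons, List.prod_cons, map_mul]
  have hgrade : ∀ n : ℤ, ∀ a ∈ homComp k Q n,
      π₁ a ∈ homComp k (Q.deleteVertex v₀ hT.her) n := by
    intro n a ha
    refine Submodule.span_induction ?_ ?_ ?_ ?_ ha
    · rintro x ⟨l, hdeg, rfl⟩
      rcases hkey l with h0 | ⟨l', hd', hl'⟩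
      · rw [h0]; exact zero_mem _
      · rw [hl']
        exact Submodule.subset_span ⟨l', by rw [hd', hdeg], rfl⟩
    · rw [map_zero]; exact zero_mem _
    · intro x y _ _ hx hy
      rw [map_add]; exact add_mem hx hy
    · intro c x _ hx
      rw [map_smul]; exact Submodule.smul_mem _ c hx
  exact ⟨π₁, hvert, hvert0, hedge, hedge0, hghost, hghost0, hsurj, hgrade⟩

end QGraph
end
end
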